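/- ∑_{k=1}^∞ 8^k/(k·3^k·C(3k,k)) = (2/7)·(π√3 − log 3). -/

import Mathlib

open scoped Nat
open MeasureTheory intervalIntegral Real

lemma prod_fact (m : ℕ) : ∀ k : ℕ, m ! * ∏ j ∈ Finset.range k, (m + 1 + j) = (m + k)! := by
  intro k
  induction k with
  | zero => simp
  | succ k ih =>
    rw [Finset.prod_range_succ, ← mul_assoc, ih]
    rw [show m + (k+1) = (m + k) + 1 by ring, Nat.factorial_succ]
    ring

lemma beta_nat (m n : ℕ) :
    ∫ x in (0:ℝ)..1, x ^ m * (1 - x) ^ n = (m ! * n ! : ℝ) / ((m + n + 1)! : ℝ) := by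
  have hu : 0 < Complex.re ((m : ℂ) + 1) := by simp; positivity
  have h := Complex.betaIntegral_eval_nat_add_one_right hu n
  rw [Complex.betaIntegral] at h
  have heq : (∫ x in (0:ℝ)..1, (x:ℂ) ^ ((m:ℂ) + 1 - 1) * (1 - (x:ℂ)) ^ ((n:ℂ) + 1 - 1))
      = ((∫ x in (0:ℝ)..1, x ^ m * (1 - x) ^ n : ℝ) : ℂ) := by
    rw [← intervalIntegral.integral_ofReal]
    refine intervalIntegral.integral_congr fun x _ => ?_
    rw [add_sub_cancel_right, add_sub_cancel_right, Complex.cpow_natCast, Complex.cpow_natCast]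
    push_cast
    ring
  rw [heq] at h
  have hm : (m ! : ℂ) ≠ 0 := by exact_mod_cast Nat.factorial_ne_zero m
  have hprod : (∏ j ∈ Finset.range (n + 1), ((m:ℂ) + 1 + j)) = ((m + n + 1)! : ℂ) / (m ! : ℂ) := by
    have h2 : ((m ! : ℕ) : ℂ) * ∏ j ∈ Finset.range (n+1), ((m:ℂ) + 1 + j)
        = (((m + n + 1)! : ℕ) : ℂ) := by
      rw [show m + n + 1 = m + (n + 1) by ring, ← prod_fact m (n + 1)]; push_cast; ring
    rw [eq_div_iff hm]
    rw [← h2]; ring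
  rw [hprod] at h
  have hm2 : (m ! : ℂ) ≠ 0 := hm
  have hf : ((m + n + 1)! : ℂ) ≠ 0 := by exact_mod_cast Nat.factorial_ne_zero _
  have hfr : (((m + n + 1)! : ℕ) : ℝ) ≠ 0 := by exact_mod_cast Nat.factorial_ne_zero _
  field_simp at h
  rw [eq_div_iff hfr]
  rw [mul_comm (m ! : ℝ)]
  exact_mod_cast h

noncomputable def g (k : ℕ) (x : ℝ) : ℝ := (8/3 : ℝ)^(k+1) * (x ^ k * (1 - x) ^ (2*k+2))

lemma g_integral (k : ℕ) :
    ∫ x in Set.Ioc (0:ℝ) 1, g k x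
      = (8 : ℝ) ^ (k + 1) /
        ((k + 1 : ℝ) * 3 ^ (k + 1) * (Nat.choose (3 * (k + 1)) (k + 1) : ℝ)) := by
  have h1 : ∫ x in Set.Ioc (0:ℝ) 1, g k x = ∫ x in (0:ℝ)..1, g k x :=
    (intervalIntegral.integral_of_le zero_le_one).symm
  rw [h1]
  unfold g
  rw [intervalIntegral.integral_const_mul, beta_nat k (2*k+2)]
  have hchoose : (k+1)! * (2*k+2)! * Nat.choose (3*(k+1)) (k+1) = (3*(k+1))! := by
    have := Nat.choose_mul_factorial_mul_factorial (show k+1 ≤ 3*(k+1) by omega)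
    rw [show 3*(k+1) - (k+1) = 2*k+2 by omega] at this
    linarith [this]
  have hC : (0:ℝ) < (Nat.choose (3*(k+1)) (k+1) : ℝ) := by
    exact_mod_cast Nat.choose_pos (show k+1 ≤ 3*(k+1) by omega)
  have hk1 : (0:ℝ) < (k:ℝ) + 1 := by positivity
  have hfact : ((k + (2*k+2) + 1)! : ℝ)
      = ((k+1)! : ℝ) * ((2*k+2)! : ℝ) * (Nat.choose (3*(k+1)) (k+1) : ℝ) := by
    rw [show k + (2*k+2) + 1 = 3*(k+1) by omega, ← hchoose]; push_cast; ring
  rw [hfact]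
  have hks : ((k+1)! : ℝ) = ((k:ℝ)+1) * (k ! : ℝ) := by
    rw [Nat.factorial_succ]; push_cast; ring
  rw [hks]
  have hkf : (0:ℝ) < (k ! : ℝ) := by exact_mod_cast Nat.factorial_pos k
  have h2f : (0:ℝ) < ((2*k+2)! : ℝ) := by exact_mod_cast Nat.factorial_pos _
  rw [div_pow]
  field_simp

lemma key_ineq {x : ℝ} (h0 : 0 ≤ x) (h1 : x ≤ 1) : x * (1-x)^2 ≤ 4/27 := by
  nlinarith [sq_nonneg (3*x - 1), sq_nonneg (1-x)]

lemma g_tsum {x : ℝ} (h0 : 0 ≤ x) (h1 : x ≤ 1) :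
    ∑' k : ℕ, g k x = 8*(1-x)^2 / ((3-2*x)*(4*x^2-2*x+1)) := by
  have hq : (0:ℝ) < 4*x^2-2*x+1 := by nlinarith [sq_nonneg (2*x - 1)]
  have hl : (0:ℝ) < 3-2*x := by linarith
  set r : ℝ := (8/3) * (x * (1-x)^2) with hr
  have hr0 : 0 ≤ r := by positivity
  have hr1 : r < 1 := by
    have := key_ineq h0 h1
    rw [hr]; nlinarith
  have hgeq : ∀ k : ℕ, g k x = ((8/3) * (1-x)^2) * r ^ k := by
    intro k
    unfold g
    rw [hr, mul_pow, mul_pow, pow_succ, pow_add, ← pow_mul]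
    ring
  rw [tsum_congr hgeq, tsum_mul_left, tsum_geometric_of_lt_one hr0 hr1]
  have hden : 1 - r ≠ 0 := by linarith
  have hfac : (3-2*x)*(4*x^2-2*x+1) = 3 * (1 - r) := by rw [hr]; ring
  rw [hfac]
  rw [div_mul_eq_div_div, eq_div_iff hden]
  field_simp

lemma g_bound (k : ℕ) {x : ℝ} (h0 : 0 ≤ x) (h1 : x ≤ 1) :
    ‖g k x‖ ≤ (8/3) * (32/81 : ℝ)^k := by
  have h1x : 0 ≤ 1 - x := by linarith
  have hg0 : 0 ≤ g k x := by unfold g; positivity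
  rw [Real.norm_of_nonneg hg0]
  unfold g
  have hx : x ^ k * (1-x)^(2*k+2) ≤ (4/27 : ℝ)^k := by
    have h2 : x ^ k * (1-x)^(2*k+2) ≤ x ^ k * (1-x)^(2*k) := by
      have : (1-x)^(2*k+2) ≤ (1-x)^(2*k) := by
        apply pow_le_pow_of_le_one h1x (by linarith) (by omega)
      have hxk : (0:ℝ) ≤ x ^ k := by positivity
      nlinarith
    have h3 : x ^ k * (1-x)^(2*k) = (x * (1-x)^2)^k := by
      rw [mul_pow, ← pow_mul]
    calc x ^ k * (1-x)^(2*k+2) ≤ x ^ k * (1-x)^(2*k) := h2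
      _ = (x * (1-x)^2)^k := h3
      _ ≤ (4/27 : ℝ)^k := by
          apply pow_le_pow_left₀ (by positivity) (key_ineq h0 h1)
  calc (8/3:ℝ)^(k+1) * (x ^ k * (1-x)^(2*k+2)) ≤ (8/3:ℝ)^(k+1) * (4/27:ℝ)^k := by
        apply mul_le_mul_of_nonneg_left hx (by positivity)
    _ = (8/3) * (32/81:ℝ)^k := by
        rw [pow_succ]; rw [show (32/81:ℝ) = (8/3)*(4/27) by norm_num, mul_pow]; ring

lemma g_cont (k : ℕ) : Continuous (g k) := by
  unfold g; continuity

lemma final_integral :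
    ∫ x in (0:ℝ)..1, 8*(1-x)^2 / ((3-2*x)*(4*x^2-2*x+1))
      = (2/7) * (Real.pi * Real.sqrt 3 - Real.log 3) := by
  have hs : Real.sqrt 3 ≠ 0 := by positivity
  have hs2 : Real.sqrt 3 ^ 2 = 3 := Real.sq_sqrt (by norm_num)
  set F : ℝ → ℝ := fun x =>
    (-Real.log (3-2*x) - 3*Real.log (4*x^2-2*x+1)
      + 4*Real.sqrt 3 * Real.arctan ((4*x-1)/Real.sqrt 3))/7 with hF
  have hderiv : ∀ x ∈ Set.uIcc (0:ℝ) 1,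
      HasDerivAt F (8*(1-x)^2 / ((3-2*x)*(4*x^2-2*x+1))) x := by
    intro x hx
    rw [Set.uIcc_of_le zero_le_one] at hx
    obtain ⟨h0, h1⟩ := hx
    have hl : (0:ℝ) < 3-2*x := by linarith
    have hq : (0:ℝ) < 4*x^2-2*x+1 := by nlinarith [sq_nonneg (2*x - 1)]
    have d1 : HasDerivAt (fun x : ℝ => 3-2*x) (-2) x := by
      exact (((hasDerivAt_id' x).const_mul 2).const_sub 3).congr_deriv (by norm_num)
    have d2 : HasDerivAt (fun x : ℝ => 4*x^2-2*x+1) (8*x-2) x := by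
      have h := (((hasDerivAt_pow 2 x).const_mul (4:ℝ)).sub ((hasDerivAt_id x).const_mul 2)).add_const 1
      exact h.congr_deriv (by norm_num; ring)
    have d3 : HasDerivAt (fun x : ℝ => (4*x-1)/Real.sqrt 3) (4/Real.sqrt 3) x := by
      have : HasDerivAt (fun x : ℝ => (4*x-1)/Real.sqrt 3) (4 * (Real.sqrt 3)⁻¹) x := by
        simpa [div_eq_mul_inv] using
          (((hasDerivAt_id x).const_mul 4).sub_const 1).mul_const (Real.sqrt 3)⁻¹
      simpa [div_eq_mul_inv] using this
    have dlog1 : HasDerivAt (fun x : ℝ => Real.log (3-2*x)) ((3-2*x)⁻¹ * (-2)) x :=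
      by have := (Real.hasDerivAt_log hl.ne').comp x d1; exact this
    have dlog2 : HasDerivAt (fun x : ℝ => Real.log (4*x^2-2*x+1)) ((4*x^2-2*x+1)⁻¹ * (8*x-2)) x :=
      by have := (Real.hasDerivAt_log hq.ne').comp x d2; exact this
    have darct : HasDerivAt (fun x : ℝ => Real.arctan ((4*x-1)/Real.sqrt 3))
        ((1 / (1 + ((4*x-1)/Real.sqrt 3)^2)) * (4/Real.sqrt 3)) x :=
      by have := (Real.hasDerivAt_arctan ((4*x-1)/Real.sqrt 3)).comp x d3; exact this
    have dF : HasDerivAt F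
        ((-( (3-2*x)⁻¹ * (-2)) - 3*((4*x^2-2*x+1)⁻¹ * (8*x-2))
          + 4*Real.sqrt 3 * ((1 / (1 + ((4*x-1)/Real.sqrt 3)^2)) * (4/Real.sqrt 3)))/7) x := by
      exact ((dlog1.neg.sub (dlog2.const_mul 3)).add (darct.const_mul (4*Real.sqrt 3))).div_const 7
    convert dF using 1
    have h1p : 1 + ((4*x-1)/Real.sqrt 3)^2 = (3 + (4*x-1)^2)/3 := by
      rw [div_pow, hs2]; ring
    rw [h1p]
    have h3p : (0:ℝ) < 3 + (4*x-1)^2 := by positivity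
    field_simp
    have hl' : 3 - x*2 ≠ 0 := by linarith
    have hq' : x*(x*4-2)+1 ≠ 0 := by nlinarith
    field_simp
    ring
  have hcont : IntervalIntegrable (fun x => 8*(1-x)^2 / ((3-2*x)*(4*x^2-2*x+1))) volume 0 1 := by
    apply ContinuousOn.intervalIntegrable
    apply ContinuousOn.div
    · fun_prop
    · fun_prop
    · intro x hx
      rw [Set.uIcc_of_le zero_le_one] at hx
      obtain ⟨h0, h1⟩ := hx
      have hl : (0:ℝ) < 3-2*x := by linarith
      have hq : (0:ℝ) < 4*x^2-2*x+1 := by nlinarith [sq_nonneg (2*x - 1)]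
      positivity
  rw [intervalIntegral.integral_eq_sub_of_hasDerivAt hderiv hcont]
  have e1 : (4*(1:ℝ)-1)/Real.sqrt 3 = Real.sqrt 3 := by
    have h33 : Real.sqrt 3 * Real.sqrt 3 = 3 := Real.mul_self_sqrt (by norm_num)
    rw [show (4*(1:ℝ)-1) = 3 by norm_num, eq_comm, eq_div_iff hs, h33]
  have e2 : (4*(0:ℝ)-1)/Real.sqrt 3 = -(1/Real.sqrt 3) := by ring
  have a1 : Real.arctan (Real.sqrt 3) = Real.pi/3 := by
    apply Real.arctan_eq_of_tan_eq Real.tan_pi_div_three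
    constructor <;> [linarith [Real.pi_pos]; linarith [Real.pi_pos]]
  have a2 : Real.arctan (1/Real.sqrt 3) = Real.pi/6 := by
    apply Real.arctan_eq_of_tan_eq Real.tan_pi_div_six
    constructor <;> [linarith [Real.pi_pos]; linarith [Real.pi_pos]]
  rw [hF]
  simp only []
  rw [show (3-2*(1:ℝ)) = 1 by norm_num, show (4*(1:ℝ)^2-2*1+1) = 3 by norm_num,
    show (3-2*(0:ℝ)) = 3 by norm_num, show (4*(0:ℝ)^2-2*0+1) = 1 by norm_num,
    e1, e2, Real.arctan_neg, a1, a2, Real.log_one]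
  ring

theorem stmt_5 :
    ∑' k : ℕ, (8 : ℝ) ^ (k + 1) /
        ((k + 1 : ℝ) * 3 ^ (k + 1) * (Nat.choose (3 * (k + 1)) (k + 1) : ℝ)) =
      (2 / 7) * (Real.pi * Real.sqrt 3 - Real.log 3) := by
  have h1 : (∑' k : ℕ, (8 : ℝ) ^ (k + 1) /
        ((k + 1 : ℝ) * 3 ^ (k + 1) * (Nat.choose (3 * (k + 1)) (k + 1) : ℝ)))
      = ∑' k : ℕ, ∫ x in Set.Ioc (0:ℝ) 1, g k x :=
    tsum_congr fun k => (g_integral k).symm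
  have hint : ∀ k : ℕ, Integrable (g k) (volume.restrict (Set.Ioc (0:ℝ) 1)) :=
    fun k => (g_cont k).integrableOn_Ioc
  have hbound : ∀ k : ℕ, ∫ x in Set.Ioc (0:ℝ) 1, ‖g k x‖ ≤ (8/3) * (32/81 : ℝ)^k := by
    intro k
    calc ∫ x in Set.Ioc (0:ℝ) 1, ‖g k x‖
        ≤ ∫ _x in Set.Ioc (0:ℝ) 1, ((8/3) * (32/81 : ℝ)^k) := by
          apply setIntegral_mono_on (hint k).norm
            (integrableOn_const (by simp))
            measurableSet_Ioc
          intro x hx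
          exact g_bound k hx.1.le hx.2
      _ = (8/3) * (32/81 : ℝ)^k := by
          simp [Real.volume_Ioc]
  have hsum : Summable fun k : ℕ => ∫ x in Set.Ioc (0:ℝ) 1, ‖g k x‖ :=
    Summable.of_nonneg_of_le (fun k => integral_nonneg fun x => norm_nonneg _) hbound
      ((summable_geometric_of_lt_one (by norm_num) (by norm_num : (32/81:ℝ) < 1)).mul_left (8/3 : ℝ))
  rw [h1, MeasureTheory.integral_tsum_of_summable_integral_norm hint hsum]
  have h2 : ∫ x in Set.Ioc (0:ℝ) 1, (∑' k : ℕ, g k x)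
      = ∫ x in Set.Ioc (0:ℝ) 1, 8*(1-x)^2 / ((3-2*x)*(4*x^2-2*x+1)) := by
    apply setIntegral_congr_fun measurableSet_Ioc
    intro x hx
    exact g_tsum hx.1.le hx.2
  rw [h2, ← intervalIntegral.integral_of_le zero_le_one, final_integral]
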